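/- arXiv:2408.12094 — 2 statements merged into one kernel-verified Lean document; each statement's English description precedes it below -/
import Mathlib

section
/- Let f : ℝ → X be bounded and continuous. Then for each t ∈ ℝ the Bochner integral u(t) := ∫_ℝ G(t,s) f(s) ds converges, u is bounded and continuous on ℝ, and sup_{t∈ℝ} ‖u(t)‖ ≤ (2(1+H)N/β) · sup_{s∈ℝ} ‖f(s)‖. -/
open MeasureTheory Real Filter Bornology

/-- An evolution family on a Banach space `X` together with an exponential dichotomy:
projections `P t`, the inverses `V s t` of the restrictions of `U t s` to the kernels
of the projections (i.e. `V s t = U_Q(s,t)` for `s ≤ t`), dichotomy constants `N, β`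
and a bound `H` on the norms of the projections. -/
structure EvolutionDichotomy (X : Type*) [NormedAddCommGroup X] [NormedSpace ℝ X] where
  U : ℝ → ℝ → X →L[ℝ] X
  P : ℝ → X →L[ℝ] X
  V : ℝ → ℝ → X →L[ℝ] X
  N : ℝ
  β : ℝ
  H : ℝ
  N_pos : 0 < N
  β_pos : 0 < β
  U_id : ∀ s, U s s = ContinuousLinearMap.id ℝ X
  U_comp : ∀ ⦃s r t : ℝ⦄, s ≤ r → r ≤ t → ∀ x, U t r (U r s x) = U t s x
  U_cont : ∀ x : X, ContinuousOn (fun p : ℝ × ℝ => U p.1 p.2 x) {p : ℝ × ℝ | p.2 ≤ p.1}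
  P_proj : ∀ t x, P t (P t x) = P t x
  P_cont : ∀ x : X, Continuous fun t => P t x
  P_bound : ∀ t, ‖P t‖ ≤ H
  comm : ∀ ⦃s t : ℝ⦄, s ≤ t → ∀ x, P t (U t s x) = U t s (P s x)
  V_mapsTo : ∀ ⦃s t : ℝ⦄, s ≤ t → ∀ x, P s (V s t (x - P t x)) = 0
  V_left : ∀ ⦃s t : ℝ⦄, s ≤ t → ∀ x, V s t (U t s (x - P s x)) = x - P s x
  V_right : ∀ ⦃s t : ℝ⦄, s ≤ t → ∀ x, U t s (V s t (x - P t x)) = x - P t x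
  P_decay : ∀ ⦃s t : ℝ⦄, s ≤ t → ∀ x, ‖U t s (P s x)‖ ≤ N * Real.exp (-β * (t - s)) * ‖x‖
  Q_decay : ∀ ⦃s t : ℝ⦄, s ≤ t → ∀ x, ‖V s t (x - P t x)‖ ≤ N * Real.exp (-β * (t - s)) * ‖x‖

namespace EvolutionDichotomy

variable {X : Type*} [NormedAddCommGroup X] [NormedSpace ℝ X]

/-- The complementary projection `Q t = Id - P t`. -/
noncomputable def Q (E : EvolutionDichotomy X) (t : ℝ) : X →L[ℝ] X :=
  ContinuousLinearMap.id ℝ X - E.P t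

/-- The Green function of the dichotomy: `G t s = P t ∘ U t s` for `t > s` and
`G t s = -(U_Q(t,s) ∘ Q s)` for `t ≤ s`. -/
noncomputable def G (E : EvolutionDichotomy X) (t s : ℝ) : X →L[ℝ] X :=
  if s < t then (E.P t).comp (E.U t s) else -((E.V t s).comp (E.Q s))

/-- The Green function is exponentially almost periodic. -/
def ExpAP (E : EvolutionDichotomy X) : Prop :=
  ∀ η > (0:ℝ), ∀ ε > (0:ℝ), ∃ γ > (0:ℝ), ∃ l > (0:ℝ), ∀ a : ℝ,
    ∃ T ∈ Set.Icc a (a + l), ∀ t s : ℝ, η ≤ |t - s| →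
      ‖E.G (t + T) (s + T) - E.G t s‖ ≤ ε * Real.exp (-γ * |t - s|)

end EvolutionDichotomy

/-- A bounded continuous function `f : ℝ → X` is (Bohr) almost periodic if for every `ε > 0`
there is `l > 0` such that every interval of length `l` contains an `ε`-almost period. -/
def AlmostPeriodic {X : Type*} [NormedAddCommGroup X] (f : ℝ → X) : Prop :=
  Continuous f ∧ Bornology.IsBounded (Set.range f) ∧
  ∀ ε > (0:ℝ), ∃ l > (0:ℝ), ∀ a : ℝ, ∃ T ∈ Set.Icc a (a + l),
    ∀ t : ℝ, ‖f (t + T) - f t‖ < ε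

/-- A function on `[0,∞)` is asymptotically almost periodic if it is the sum of an almost
periodic function and a continuous function vanishing at infinity. -/
def AsympAlmostPeriodic {X : Type*} [NormedAddCommGroup X] (g : ℝ → X) : Prop :=
  ∃ h φ : ℝ → X, AlmostPeriodic h ∧ ContinuousOn φ (Set.Ici 0) ∧
    Filter.Tendsto (fun t => ‖φ t‖) Filter.atTop (nhds 0) ∧
    ∀ t : ℝ, 0 ≤ t → g t = h t + φ t

/-- `PAP0`: bounded continuous functions with vanishing mean value. -/
def PAP0 {X : Type*} [NormedAddCommGroup X] (φ : ℝ → X) : Prop :=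
  Continuous φ ∧ Bornology.IsBounded (Set.range φ) ∧
  Filter.Tendsto (fun r : ℝ => (1 / (2 * r)) * ∫ t in (-r)..r, ‖φ t‖)
    Filter.atTop (nhds 0)

/-- A bounded continuous function is pseudo almost periodic if it is the sum of an almost
periodic function and a `PAP0` function. -/
def PseudoAP {X : Type*} [NormedAddCommGroup X] (f : ℝ → X) : Prop :=
  ∃ g φ : ℝ → X, AlmostPeriodic g ∧ PAP0 φ ∧ ∀ t : ℝ, f t = g t + φ t

section GreenAux

variable {X : Type*} [NormedAddCommGroup X] [NormedSpace ℝ X]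

namespace EvolutionDichotomy

variable (E : EvolutionDichotomy X)

lemma H_nonneg : 0 ≤ E.H := le_trans (norm_nonneg _) (E.P_bound 0)

lemma Q_apply' (s : ℝ) (x : X) : E.Q s x = x - E.P s x := rfl

lemma P_Q (s : ℝ) (x : X) : E.P s (E.Q s x) = 0 := by
  rw [Q_apply', map_sub, E.P_proj, sub_self]

lemma norm_P_apply_le (s : ℝ) (x : X) : ‖E.P s x‖ ≤ E.H * ‖x‖ :=
  le_trans ((E.P s).le_opNorm x) (mul_le_mul_of_nonneg_right (E.P_bound s) (norm_nonneg x))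

lemma norm_Q_apply_le (s : ℝ) (x : X) : ‖E.Q s x‖ ≤ (1 + E.H) * ‖x‖ := by
  rw [Q_apply']
  calc ‖x - E.P s x‖ ≤ ‖x‖ + ‖E.P s x‖ := norm_sub_le _ _
    _ ≤ ‖x‖ + E.H * ‖x‖ := add_le_add_right (E.norm_P_apply_le s x) _
    _ = (1 + E.H) * ‖x‖ := by ring

lemma V_left' {s t : ℝ} (h : s ≤ t) {y : X} (hy : E.P s y = 0) :
    E.V s t (E.U t s y) = y := by
  have h1 := E.V_left h y
  rwa [hy, sub_zero] at h1

lemma V_right' {s t : ℝ} (h : s ≤ t) {y : X} (hy : E.P t y = 0) :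
    E.U t s (E.V s t y) = y := by
  have h1 := E.V_right h y
  rwa [hy, sub_zero] at h1

lemma V_mapsTo' {s t : ℝ} (h : s ≤ t) {y : X} (hy : E.P t y = 0) :
    E.P s (E.V s t y) = 0 := by
  have h1 := E.V_mapsTo h y
  rwa [hy, sub_zero] at h1

lemma Q_decay' {s t : ℝ} (h : s ≤ t) {y : X} (hy : E.P t y = 0) :
    ‖E.V s t y‖ ≤ E.N * Real.exp (-E.β * (t - s)) * ‖y‖ := by
  have h1 := E.Q_decay h y
  rwa [hy, sub_zero] at h1

lemma exp_le_one_aux {a b : ℝ} (hβ : 0 < b) (ha : 0 ≤ a) : Real.exp (-b * a) ≤ 1 := by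
  rw [← Real.exp_zero]
  exact Real.exp_le_exp.2 (by nlinarith)

lemma U_P_le {s t : ℝ} (h : s ≤ t) {y : X} (hy : E.P s y = y) :
    ‖E.U t s y‖ ≤ E.N * ‖y‖ := by
  have h1 := E.P_decay h y
  rw [hy] at h1
  refine h1.trans ?_
  calc E.N * Real.exp (-E.β * (t - s)) * ‖y‖ ≤ E.N * 1 * ‖y‖ :=
        mul_le_mul_of_nonneg_right
          (mul_le_mul_of_nonneg_left (exp_le_one_aux E.β_pos (by linarith)) E.N_pos.le)
          (norm_nonneg y)
    _ = E.N * ‖y‖ := by ring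

lemma UP_norm_le {s t : ℝ} (h : s ≤ t) (w : X) :
    ‖E.U t s (E.P s w)‖ ≤ E.N * ‖w‖ := by
  refine (E.P_decay h w).trans ?_
  calc E.N * Real.exp (-E.β * (t - s)) * ‖w‖ ≤ E.N * 1 * ‖w‖ :=
        mul_le_mul_of_nonneg_right
          (mul_le_mul_of_nonneg_left (exp_le_one_aux E.β_pos (by linarith)) E.N_pos.le)
          (norm_nonneg w)
    _ = E.N * ‖w‖ := by ring

lemma VQ_le {r s : ℝ} (h : r ≤ s) {y : X} (hy : E.P s y = 0) :
    ‖E.V r s y‖ ≤ E.N * ‖y‖ := by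
  refine (E.Q_decay' h hy).trans ?_
  calc E.N * Real.exp (-E.β * (s - r)) * ‖y‖ ≤ E.N * 1 * ‖y‖ :=
        mul_le_mul_of_nonneg_right
          (mul_le_mul_of_nonneg_left (exp_le_one_aux E.β_pos (by linarith)) E.N_pos.le)
          (norm_nonneg y)
    _ = E.N * ‖y‖ := by ring

lemma V_unique {s t : ℝ} (h : s ≤ t) {a b : X} (ha : E.P s a = 0) (hb : E.P s b = 0)
    (hab : E.U t s a = E.U t s b) : a = b := by
  rw [← E.V_left' h ha, hab, E.V_left' h hb]

lemma V_self {s : ℝ} {y : X} (hy : E.P s y = 0) : E.V s s y = y := by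
  have h1 := E.V_left' (le_refl s) hy
  rw [E.U_id] at h1
  simpa using h1

lemma V_comp {t r s : ℝ} (h1 : t ≤ r) (h2 : r ≤ s) {y : X} (hy : E.P s y = 0) :
    E.V t s y = E.V t r (E.V r s y) := by
  have hrs : E.P r (E.V r s y) = 0 := E.V_mapsTo' h2 hy
  refine E.V_unique (h1.trans h2) (E.V_mapsTo' (h1.trans h2) hy) (E.V_mapsTo' h1 hrs) ?_
  rw [E.V_right' (h1.trans h2) hy, ← E.U_comp h1 h2 (E.V t r (E.V r s y)),
    E.V_right' h1 hrs, E.V_right' h2 hy]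

lemma U_V {t₁ t s : ℝ} (h1 : t₁ ≤ t) (h2 : t ≤ s) {y : X} (hy : E.P s y = 0) :
    E.U t t₁ (E.V t₁ s y) = E.V t s y := by
  rw [E.V_comp h1 h2 hy]
  exact E.V_right' h1 (E.V_mapsTo' h2 hy)

lemma V_U {t s₀ s : ℝ} (h1 : t ≤ s₀) (h2 : s₀ ≤ s) {y : X} (hy : E.P s₀ y = 0) :
    E.V t s (E.U s s₀ y) = E.V t s₀ y := by
  have hy' : E.P s (E.U s s₀ y) = 0 := by rw [E.comm h2, hy, map_zero]
  refine E.V_unique (h1.trans h2) (E.V_mapsTo' (h1.trans h2) hy') (E.V_mapsTo' h1 hy) ?_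
  rw [E.V_right' (h1.trans h2) hy', ← E.U_comp h1 h2 (E.V t s₀ y), E.V_right' h1 hy]

lemma U_cont_fst (s : ℝ) (x : X) :
    ContinuousOn (fun r : ℝ => E.U r s x) (Set.Ici s) := by
  have hmap : Set.MapsTo (fun r : ℝ => (r, s)) (Set.Ici s) {p : ℝ × ℝ | p.2 ≤ p.1} :=
    fun r hr => hr
  simpa [Function.comp_def] using
    (E.U_cont x).comp ((continuous_id.prodMk continuous_const).continuousOn) hmap

lemma U_cont_snd (t : ℝ) (x : X) :
    ContinuousOn (fun r : ℝ => E.U t r x) (Set.Iic t) := by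
  have hmap : Set.MapsTo (fun r : ℝ => (t, r)) (Set.Iic t) {p : ℝ × ℝ | p.2 ≤ p.1} :=
    fun r hr => hr
  simpa [Function.comp_def] using
    (E.U_cont x).comp ((continuous_const.prodMk continuous_id).continuousOn) hmap

lemma U_contAt_fst {s t₀ : ℝ} (h : s < t₀) (x : X) :
    ContinuousAt (fun r : ℝ => E.U r s x) t₀ :=
  (E.U_cont_fst s x).continuousAt (Ici_mem_nhds h)

lemma contAt_P_comp {y : ℝ → X} {t₀ : ℝ} (hy : ContinuousAt y t₀) :
    ContinuousAt (fun t => E.P t (y t)) t₀ := by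
  have h1 : Filter.Tendsto (fun t => E.P t (y t - y t₀)) (nhds t₀) (nhds 0) := by
    refine squeeze_zero_norm (fun t => E.norm_P_apply_le t _) ?_
    have h2 : Filter.Tendsto (fun t => ‖y t - y t₀‖) (nhds t₀) (nhds 0) := by
      have h3 : Filter.Tendsto (fun t => y t - y t₀) (nhds t₀) (nhds (y t₀ - y t₀)) :=
        Filter.Tendsto.sub hy tendsto_const_nhds
      have h4 := h3.norm
      rw [sub_self, norm_zero] at h4
      exact h4
    have := (tendsto_const_nhds (x := E.H)).mul h2
    simpa using this
  have h2 := (E.P_cont (y t₀)).tendsto t₀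
  have key : (fun t => E.P t (y t)) = fun t => E.P t (y t - y t₀) + E.P t (y t₀) := by
    funext u; rw [map_sub]; abel
  rw [ContinuousAt, key]
  simpa using h1.add h2

lemma norm_G_apply_le (t s : ℝ) (x : X) :
    ‖E.G t s x‖ ≤ E.N * Real.exp (-E.β * |t - s|) * ‖x‖ := by
  rw [EvolutionDichotomy.G]
  split_ifs with h
  · rw [ContinuousLinearMap.comp_apply, E.comm h.le, abs_of_nonneg (by linarith : (0:ℝ) ≤ t - s)]
    exact E.P_decay h.le x
  · push_neg at h
    rw [ContinuousLinearMap.neg_apply, ContinuousLinearMap.comp_apply, norm_neg,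
      abs_of_nonpos (by linarith : t - s ≤ 0), neg_sub, E.Q_apply']
    exact E.Q_decay h x


lemma cwa_of_norm_sub {A : ℝ → X} {S : Set ℝ} {s₀ : ℝ} {g : ℝ → ℝ}
    (hbd : ∀ᶠ s in nhdsWithin s₀ S, ‖A s - A s₀‖ ≤ g s)
    (hg : Filter.Tendsto g (nhdsWithin s₀ S) (nhds 0)) :
    ContinuousWithinAt A S s₀ := by
  have h0 : Filter.Tendsto (fun s => A s - A s₀) (nhdsWithin s₀ S) (nhds 0) :=
    squeeze_zero_norm' hbd hg
  have h1 := h0.add (tendsto_const_nhds (x := A s₀))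
  exact (by simpa using h1 : Filter.Tendsto A (nhdsWithin s₀ S) (nhds (A s₀)))

lemma tendsto_aux {S : Set ℝ} {s₀ : ℝ} (c1 c2 : ℝ) {v w : ℝ → X}
    (hv : ContinuousWithinAt v S s₀) (hw : ContinuousWithinAt w S s₀) (hw0 : w s₀ = 0) :
    Filter.Tendsto (fun s => c1 * ‖v s - v s₀‖ + c2 * ‖w s‖) (nhdsWithin s₀ S) (nhds 0) := by
  have h1 : Filter.Tendsto (fun s => c1 * ‖v s - v s₀‖) (nhdsWithin s₀ S)
      (nhds (c1 * ‖v s₀ - v s₀‖)) :=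
    tendsto_const_nhds.mul (hv.sub (tendsto_const_nhds (x := v s₀))).norm
  have h2 : Filter.Tendsto (fun s => c2 * ‖w s‖) (nhdsWithin s₀ S) (nhds (c2 * ‖w s₀‖)) :=
    tendsto_const_nhds.mul hw.norm
  have h3 := h1.add h2
  simpa [hw0] using h3

lemma contOn_stable (E : EvolutionDichotomy X) {f : ℝ → X} (hf : Continuous f) (t : ℝ) :
    ContinuousOn (fun s => E.U t s (E.P s (f s))) (Set.Iic t) := by
  intro s₀ hs₀
  have hs₀t : s₀ ≤ t := hs₀
  have hR : ContinuousWithinAt (fun s => E.U t s (E.P s (f s))) (Set.Icc s₀ t) s₀ := by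
    refine cwa_of_norm_sub (g := fun s => (E.N * E.H) * ‖f s - f s₀‖ +
        E.N * ‖E.P s (f s₀) - E.U s s₀ (E.P s₀ (f s₀))‖) ?_ ?_
    · filter_upwards [eventually_mem_nhdsWithin] with s hs
      have hs1 : s₀ ≤ s := hs.1
      have hs2 : s ≤ t := hs.2
      show ‖E.U t s (E.P s (f s)) - E.U t s₀ (E.P s₀ (f s₀))‖ ≤ _
      rw [← E.U_comp hs1 hs2 (E.P s₀ (f s₀)), ← map_sub]
      have hPy : E.P s (E.P s (f s) - E.U s s₀ (E.P s₀ (f s₀))) =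
          E.P s (f s) - E.U s s₀ (E.P s₀ (f s₀)) := by
        rw [map_sub, E.P_proj, E.comm hs1, E.P_proj]
      refine (E.U_P_le hs2 hPy).trans ?_
      have hdec : E.P s (f s) - E.U s s₀ (E.P s₀ (f s₀)) =
          E.P s (f s - f s₀) + (E.P s (f s₀) - E.U s s₀ (E.P s₀ (f s₀))) := by
        rw [map_sub]; abel
      have e4 : ‖E.P s (f s) - E.U s s₀ (E.P s₀ (f s₀))‖ ≤
          E.H * ‖f s - f s₀‖ + ‖E.P s (f s₀) - E.U s s₀ (E.P s₀ (f s₀))‖ := by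
        rw [hdec]
        exact (norm_add_le _ _).trans (add_le_add_left (E.norm_P_apply_le s _) _)
      nlinarith [mul_le_mul_of_nonneg_left e4 E.N_pos.le]
    · refine tendsto_aux _ _ hf.continuousWithinAt ?_ ?_
      · exact ((E.P_cont (f s₀)).continuousWithinAt).sub
          (((E.U_cont_fst s₀ (E.P s₀ (f s₀))).continuousWithinAt
            Set.self_mem_Ici).mono Set.Icc_subset_Ici_self)
      · rw [E.U_id]; simp
  have hL : ContinuousWithinAt (fun s => E.U t s (E.P s (f s))) (Set.Iic s₀) s₀ := by
    refine cwa_of_norm_sub (g := fun s => (E.N * E.N) * ‖f s - f s₀‖ +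
        (E.N * E.H) * ‖E.U s₀ s (f s₀) - f s₀‖) ?_ ?_
    · filter_upwards [eventually_mem_nhdsWithin] with s hs
      have hs1 : s ≤ s₀ := hs
      show ‖E.U t s (E.P s (f s)) - E.U t s₀ (E.P s₀ (f s₀))‖ ≤ _
      rw [show E.U t s (E.P s (f s)) = E.U t s₀ (E.U s₀ s (E.P s (f s))) from
        (E.U_comp hs1 hs₀t _).symm, ← map_sub]
      have hPz : E.P s₀ (E.U s₀ s (E.P s (f s)) - E.P s₀ (f s₀)) =
          E.U s₀ s (E.P s (f s)) - E.P s₀ (f s₀) := by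
        rw [map_sub, E.comm hs1, E.P_proj, E.P_proj]
      refine (E.U_P_le hs₀t hPz).trans ?_
      have hdec : E.U s₀ s (E.P s (f s)) - E.P s₀ (f s₀) =
          E.U s₀ s (E.P s (f s - f s₀)) + (E.P s₀ (E.U s₀ s (f s₀)) - E.P s₀ (f s₀)) := by
        simp only [map_sub, E.comm hs1]; abel
      have h5 : ‖E.U s₀ s (E.P s (f s - f s₀))‖ ≤ E.N * ‖f s - f s₀‖ := E.UP_norm_le hs1 _
      have h6 : ‖E.P s₀ (E.U s₀ s (f s₀)) - E.P s₀ (f s₀)‖ ≤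
          E.H * ‖E.U s₀ s (f s₀) - f s₀‖ := by
        rw [← map_sub]; exact E.norm_P_apply_le s₀ _
      have e4 : ‖E.U s₀ s (E.P s (f s)) - E.P s₀ (f s₀)‖ ≤
          E.N * ‖f s - f s₀‖ + E.H * ‖E.U s₀ s (f s₀) - f s₀‖ := by
        rw [hdec]; exact (norm_add_le _ _).trans (add_le_add h5 h6)
      nlinarith [mul_le_mul_of_nonneg_left e4 E.N_pos.le]
    · refine tendsto_aux _ _ hf.continuousWithinAt ?_ ?_
      · exact (((E.U_cont_snd s₀ (f s₀)).continuousWithinAt Set.self_mem_Iic).sub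
          continuousWithinAt_const)
      · rw [E.U_id]; simp
  exact (hL.union hR).mono (fun s hs => (le_total s s₀).imp id fun h => ⟨h, hs⟩)

lemma contOn_unstable (E : EvolutionDichotomy X) {f : ℝ → X} (hf : Continuous f) (t : ℝ) :
    ContinuousOn (fun s => E.V t s (E.Q s (f s))) (Set.Ici t) := by
  intro s₀ hs₀
  have hts₀ : t ≤ s₀ := hs₀
  have hQ0 : E.P s₀ (E.Q s₀ (f s₀)) = 0 := E.P_Q s₀ (f s₀)
  have hqc : Continuous fun s => E.Q s (f s₀) := by
    have hq : (fun s => E.Q s (f s₀)) = fun s => f s₀ - E.P s (f s₀) := by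
      funext s; rw [E.Q_apply']
    rw [hq]; exact continuous_const.sub (E.P_cont (f s₀))
  have hR : ContinuousWithinAt (fun s => E.V t s (E.Q s (f s))) (Set.Ici s₀) s₀ := by
    refine cwa_of_norm_sub (g := fun s => (E.N * (1 + E.H)) * ‖f s - f s₀‖ +
        E.N * ‖E.Q s (f s₀) - E.U s s₀ (E.Q s₀ (f s₀))‖) ?_ ?_
    · filter_upwards [eventually_mem_nhdsWithin] with s hs
      have hs1 : s₀ ≤ s := hs
      have hts : t ≤ s := hts₀.trans hs1
      show ‖E.V t s (E.Q s (f s)) - E.V t s₀ (E.Q s₀ (f s₀))‖ ≤ _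
      rw [← E.V_U hts₀ hs1 hQ0, ← map_sub]
      have hPy : E.P s (E.Q s (f s) - E.U s s₀ (E.Q s₀ (f s₀))) = 0 := by
        rw [map_sub, E.P_Q, E.comm hs1, hQ0, map_zero, zero_sub, neg_zero]
      refine (E.VQ_le hts hPy).trans ?_
      have hdec : E.Q s (f s) - E.U s s₀ (E.Q s₀ (f s₀)) =
          E.Q s (f s - f s₀) + (E.Q s (f s₀) - E.U s s₀ (E.Q s₀ (f s₀))) := by
        rw [map_sub]; abel
      have e4 : ‖E.Q s (f s) - E.U s s₀ (E.Q s₀ (f s₀))‖ ≤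
          (1 + E.H) * ‖f s - f s₀‖ + ‖E.Q s (f s₀) - E.U s s₀ (E.Q s₀ (f s₀))‖ := by
        rw [hdec]
        exact (norm_add_le _ _).trans (add_le_add_left (E.norm_Q_apply_le s _) _)
      nlinarith [mul_le_mul_of_nonneg_left e4 E.N_pos.le]
    · refine tendsto_aux _ _ hf.continuousWithinAt ?_ ?_
      · exact (hqc.continuousWithinAt).sub
          ((E.U_cont_fst s₀ (E.Q s₀ (f s₀))).continuousWithinAt Set.self_mem_Ici)
      · rw [E.U_id]; simp
  have hL : ContinuousWithinAt (fun s => E.V t s (E.Q s (f s))) (Set.Icc t s₀) s₀ := by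
    have ht₁s₀ : t - 1 ≤ s₀ := by linarith
    have hz₁ : E.P (t - 1) (E.V (t - 1) s₀ (E.Q s₀ (f s₀))) = 0 := E.V_mapsTo' ht₁s₀ hQ0
    refine cwa_of_norm_sub (g := fun s => (E.N * (1 + E.H)) * ‖f s - f s₀‖ +
        E.N * ‖E.Q s (f s₀) - E.U s (t - 1) (E.V (t - 1) s₀ (E.Q s₀ (f s₀)))‖) ?_ ?_
    · filter_upwards [eventually_mem_nhdsWithin] with s hs
      have hs1 : t ≤ s := hs.1
      have hs2 : s ≤ s₀ := hs.2
      have ht₁s : t - 1 ≤ s := by linarith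
      show ‖E.V t s (E.Q s (f s)) - E.V t s₀ (E.Q s₀ (f s₀))‖ ≤ _
      have e1 : E.V t s₀ (E.Q s₀ (f s₀)) =
          E.V t s (E.U s (t - 1) (E.V (t - 1) s₀ (E.Q s₀ (f s₀)))) := by
        rw [E.U_V ht₁s hs2 hQ0]
        exact E.V_comp hs1 hs2 hQ0
      rw [e1, ← map_sub]
      have hPy : E.P s (E.Q s (f s) - E.U s (t - 1) (E.V (t - 1) s₀ (E.Q s₀ (f s₀)))) = 0 := by
        rw [map_sub, E.P_Q, E.comm ht₁s, hz₁, map_zero, zero_sub, neg_zero]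
      refine (E.VQ_le hs1 hPy).trans ?_
      have hdec : E.Q s (f s) - E.U s (t - 1) (E.V (t - 1) s₀ (E.Q s₀ (f s₀))) =
          E.Q s (f s - f s₀) +
            (E.Q s (f s₀) - E.U s (t - 1) (E.V (t - 1) s₀ (E.Q s₀ (f s₀)))) := by
        rw [map_sub]; abel
      have e4 : ‖E.Q s (f s) - E.U s (t - 1) (E.V (t - 1) s₀ (E.Q s₀ (f s₀)))‖ ≤
          (1 + E.H) * ‖f s - f s₀‖ +
            ‖E.Q s (f s₀) - E.U s (t - 1) (E.V (t - 1) s₀ (E.Q s₀ (f s₀)))‖ := by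
        rw [hdec]
        exact (norm_add_le _ _).trans (add_le_add_left (E.norm_Q_apply_le s _) _)
      nlinarith [mul_le_mul_of_nonneg_left e4 E.N_pos.le]
    · refine tendsto_aux _ _ hf.continuousWithinAt ?_ ?_
      · refine (hqc.continuousWithinAt).sub ?_
        refine ((E.U_cont_fst (t - 1) (E.V (t - 1) s₀ (E.Q s₀ (f s₀)))).continuousWithinAt
          (by simp only [Set.mem_Ici]; linarith)).mono ?_
        intro s hs
        simp only [Set.mem_Ici]
        have := hs.1
        linarith
      · rw [E.U_V ht₁s₀ (le_refl s₀) hQ0, E.V_self hQ0, sub_self]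
  exact (hL.union hR).mono (fun s hs => (le_total s s₀).imp (fun h => ⟨hs, h⟩) id)

lemma contAt_G (E : EvolutionDichotomy X) {s t₀ : ℝ} (hne : s ≠ t₀) (x : X) :
    ContinuousAt (fun t => E.G t s x) t₀ := by
  rcases lt_or_gt_of_ne hne with h | h
  · have hev : ∀ᶠ t in nhds t₀, E.G t s x = E.P t (E.U t s x) := by
      filter_upwards [isOpen_Ioi.mem_nhds (by exact h : s < t₀)] with t ht
      simp only [EvolutionDichotomy.G]
      rw [if_pos (Set.mem_Ioi.mp ht), ContinuousLinearMap.comp_apply]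
    have hc : ContinuousAt (fun t => E.P t (E.U t s x)) t₀ :=
      E.contAt_P_comp (E.U_contAt_fst h x)
    have heq : E.G t₀ s x = E.P t₀ (E.U t₀ s x) := hev.self_of_nhds
    show Filter.Tendsto (fun t => E.G t s x) (nhds t₀) (nhds (E.G t₀ s x))
    rw [heq]
    exact Filter.Tendsto.congr' (Filter.EventuallyEq.symm hev) hc
  · have hmem : Set.Ioo (t₀ - 1) s ∈ nhds t₀ :=
      isOpen_Ioo.mem_nhds ⟨by linarith, h⟩
    have hev : ∀ᶠ t in nhds t₀,
        E.G t s x = -(E.U t (t₀ - 1) (E.V (t₀ - 1) s (E.Q s x))) := by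
      filter_upwards [hmem] with t ht
      simp only [EvolutionDichotomy.G]
      rw [if_neg (not_lt.2 ht.2.le), ContinuousLinearMap.neg_apply,
        ContinuousLinearMap.comp_apply, E.U_V ht.1.le ht.2.le (E.P_Q s x)]
    have hc : ContinuousAt (fun t => -(E.U t (t₀ - 1) (E.V (t₀ - 1) s (E.Q s x)))) t₀ :=
      (E.U_contAt_fst (by linarith) _).neg
    have heq := hev.self_of_nhds
    show Filter.Tendsto (fun t => E.G t s x) (nhds t₀) (nhds (E.G t₀ s x))
    rw [heq]
    exact Filter.Tendsto.congr' (Filter.EventuallyEq.symm hev) hc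

lemma aesm_G (E : EvolutionDichotomy X) {f : ℝ → X} (hfc : Continuous f) (t : ℝ) :
    MeasureTheory.AEStronglyMeasurable (fun s => E.G t s (f s)) (volume : Measure ℝ) := by
  have hA := E.contOn_stable hfc t
  have hB := E.contOn_unstable hfc t
  have h1 : MeasureTheory.AEStronglyMeasurable (fun s => E.G t s (f s))
      (volume.restrict (Set.Iio t)) := by
    refine ((hA.mono Set.Iio_subset_Iic_self).aestronglyMeasurable measurableSet_Iio).congr ?_
    refine (MeasureTheory.ae_restrict_iff' measurableSet_Iio).2
      (Filter.Eventually.of_forall fun s hs => ?_)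
    have hst : s < t := hs
    show E.U t s (E.P s (f s)) = E.G t s (f s)
    simp only [EvolutionDichotomy.G]
    rw [if_pos hst, ContinuousLinearMap.comp_apply, E.comm hst.le]
  have h2 : MeasureTheory.AEStronglyMeasurable (fun s => E.G t s (f s))
      (volume.restrict (Set.Iio t)ᶜ) := by
    rw [Set.compl_Iio]
    refine ((hB.neg).aestronglyMeasurable measurableSet_Ici).congr ?_
    refine (MeasureTheory.ae_restrict_iff' measurableSet_Ici).2
      (Filter.Eventually.of_forall fun s hs => ?_)
    have hst : ¬ s < t := not_lt.2 hs
    show -(E.V t s (E.Q s (f s))) = E.G t s (f s)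
    simp only [EvolutionDichotomy.G]
    rw [if_neg hst, ContinuousLinearMap.neg_apply, ContinuousLinearMap.comp_apply]
  have h3 := h1.add_measure h2
  rwa [MeasureTheory.Measure.restrict_add_restrict_compl measurableSet_Iio] at h3

end EvolutionDichotomy

lemma integrable_exp_abs_green {b : ℝ} (hb : 0 < b) :
    MeasureTheory.Integrable (fun x : ℝ => Real.exp (-b * |x|)) := by
  have hIoi : MeasureTheory.IntegrableOn (fun x : ℝ => Real.exp (-b * |x|)) (Set.Ioi 0) :=
    (exp_neg_integrableOn_Ioi 0 hb).congr_fun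
      (fun x hx => by rw [abs_of_pos hx]) measurableSet_Ioi
  have hIic : MeasureTheory.IntegrableOn (fun x : ℝ => Real.exp (-b * |x|)) (Set.Iic 0) := by
    rw [← MeasureTheory.Measure.map_neg_eq_self (volume : Measure ℝ)]
    have m : MeasurableEmbedding fun x : ℝ => -x := (Homeomorph.neg ℝ).measurableEmbedding
    rw [m.integrableOn_map_iff]
    simp only [Function.comp_def, abs_neg, Set.neg_preimage, Set.neg_Iic, neg_zero]
    exact Iff.mpr integrableOn_Ici_iff_integrableOn_Ioi hIoi
  rw [← MeasureTheory.integrableOn_univ, ← Set.Iic_union_Ioi (a := (0:ℝ))]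
  exact hIic.union hIoi

lemma integral_exp_abs_green {b : ℝ} (hb : 0 < b) :
    ∫ x : ℝ, Real.exp (-b * |x|) = 2 / b := by
  have h1 : ∫ x in Set.Ioi (0:ℝ), Real.exp (-b * x) = b⁻¹ := by
    have h2 : (fun x : ℝ => Real.exp (-b * x)) = fun x : ℝ => Real.exp (-(b * x)) := by
      funext x; rw [neg_mul]
    rw [h2]
    have h3 := MeasureTheory.integral_comp_mul_left_Ioi (fun x => Real.exp (-x)) 0 hb
    simp only [mul_zero] at h3
    rw [h3, integral_exp_neg_Ioi]
    simp
  rw [integral_comp_abs (f := fun y : ℝ => Real.exp (-b * y)), h1]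
  rw [div_eq_mul_inv]

lemma integrable_exp_abs_shift_green {b : ℝ} (hb : 0 < b) (t : ℝ) :
    MeasureTheory.Integrable (fun s : ℝ => Real.exp (-b * |t - s|)) := by
  have h := (integrable_exp_abs_green hb).comp_sub_right t
  have he : (fun s : ℝ => Real.exp (-b * |s - t|)) = fun s : ℝ => Real.exp (-b * |t - s|) := by
    funext s; rw [abs_sub_comm]
  rwa [he] at h

lemma integral_exp_abs_shift_green {b : ℝ} (hb : 0 < b) (t : ℝ) :
    ∫ s : ℝ, Real.exp (-b * |t - s|) = 2 / b := by
  have he : (fun s : ℝ => Real.exp (-b * |t - s|)) = fun s : ℝ => Real.exp (-b * |s - t|) := by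
    funext s; rw [abs_sub_comm]
  rw [he]
  rw [MeasureTheory.integral_sub_right_eq_self (fun x : ℝ => Real.exp (-b * |x|)) t]
  exact integral_exp_abs_green hb

end GreenAux


/-- for bounded continuous `f : ℝ → X`, the integral
`u(t) = ∫_ℝ G(t,s) f(s) ds` converges, `u` is bounded and continuous, and
`sup_t ‖u(t)‖ ≤ (2(1+H)N/β) · sup_s ‖f(s)‖`. -/
theorem green_convolution_bounded_continuous
    {X : Type*} [NormedAddCommGroup X] [NormedSpace ℝ X] [CompleteSpace X]
    (E : EvolutionDichotomy X) (f : ℝ → X)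
    (hfc : Continuous f) (hfb : Bornology.IsBounded (Set.range f)) :
    (∀ t : ℝ, MeasureTheory.Integrable (fun s : ℝ => E.G t s (f s))) ∧
    Continuous (fun t : ℝ => ∫ s : ℝ, E.G t s (f s)) ∧
    Bornology.IsBounded (Set.range (fun t : ℝ => ∫ s : ℝ, E.G t s (f s))) ∧
    ∀ t : ℝ, ‖∫ s : ℝ, E.G t s (f s)‖ ≤
      (2 * (1 + E.H) * E.N / E.β) * ⨆ s : ℝ, ‖f s‖ := by
    classical
  obtain ⟨C, hC⟩ := isBounded_iff_forall_norm_le.1 hfb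
  have hfC : ∀ s, ‖f s‖ ≤ C := fun s => hC _ ⟨s, rfl⟩
  set M := ⨆ s : ℝ, ‖f s‖ with hMdef
  have hbdd : BddAbove (Set.range fun s : ℝ => ‖f s‖) := ⟨C, by rintro _ ⟨s, rfl⟩; exact hfC s⟩
  have hfM : ∀ s, ‖f s‖ ≤ M := fun s => le_ciSup hbdd s
  have hM0 : (0:ℝ) ≤ M := le_trans (norm_nonneg (f 0)) (hfM 0)
  have hGb : ∀ t s : ℝ, ‖E.G t s (f s)‖ ≤ E.N * Real.exp (-E.β * |t - s|) * M := by
    intro t s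
    refine (E.norm_G_apply_le t s (f s)).trans ?_
    exact mul_le_mul_of_nonneg_left (hfM s)
      (mul_nonneg E.N_pos.le (Real.exp_pos _).le)
  have hbint : ∀ t : ℝ, MeasureTheory.Integrable
      (fun s : ℝ => E.N * Real.exp (-E.β * |t - s|) * M) := fun t =>
    ((integrable_exp_abs_shift_green E.β_pos t).const_mul E.N).mul_const M
  have hmeas : ∀ t : ℝ, MeasureTheory.AEStronglyMeasurable
      (fun s : ℝ => E.G t s (f s)) volume := fun t => E.aesm_G hfc t
  have hint : ∀ t : ℝ, MeasureTheory.Integrable (fun s : ℝ => E.G t s (f s)) := fun t =>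
    (hbint t).mono' (hmeas t) (Filter.Eventually.of_forall (hGb t))
  have hsup : ∀ t : ℝ, ‖∫ s : ℝ, E.G t s (f s)‖ ≤ 2 * (1 + E.H) * E.N / E.β * M := by
    intro t
    have h2 : (fun s : ℝ => E.N * Real.exp (-E.β * |t - s|) * M) =
        fun s : ℝ => (E.N * M) * Real.exp (-E.β * |t - s|) := by
      funext s; ring
    calc ‖∫ s : ℝ, E.G t s (f s)‖ ≤ ∫ s : ℝ, E.N * Real.exp (-E.β * |t - s|) * M :=
          MeasureTheory.norm_integral_le_of_norm_le (hbint t)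
            (Filter.Eventually.of_forall (hGb t))
      _ = (E.N * M) * ∫ s : ℝ, Real.exp (-E.β * |t - s|) := by
          rw [h2, MeasureTheory.integral_const_mul]
      _ = (E.N * M) * (2 / E.β) := by rw [integral_exp_abs_shift_green E.β_pos t]
      _ ≤ 2 * (1 + E.H) * E.N / E.β * M := by
          have hβ : (0:ℝ) < E.β := E.β_pos
          have hH : (0:ℝ) ≤ E.H := E.H_nonneg
          have hN : (0:ℝ) < E.N := E.N_pos
          rw [div_eq_mul_inv, div_eq_mul_inv]
          have hinv : (0:ℝ) ≤ E.β⁻¹ := inv_nonneg.mpr hβ.le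
          nlinarith [mul_nonneg hH (mul_nonneg (mul_nonneg hN.le hM0) hinv)]
  refine ⟨hint, ?_, ?_, hsup⟩
  · rw [continuous_iff_continuousAt]
    intro t₀
    refine MeasureTheory.continuousAt_of_dominated
      (bound := fun s => E.N * Real.exp E.β * Real.exp (-E.β * |t₀ - s|) * M)
      (Filter.Eventually.of_forall hmeas) ?_ ?_ ?_
    · filter_upwards [Metric.ball_mem_nhds t₀ one_pos] with t ht
      refine Filter.Eventually.of_forall fun s => (hGb t s).trans ?_
      have h2 : |t - t₀| < 1 := by rwa [Metric.mem_ball, Real.dist_eq] at ht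
      have h1 : |t₀ - s| ≤ |t₀ - t| + |t - s| := abs_sub_le t₀ t s
      rw [abs_sub_comm t₀ t] at h1
      have h3 : Real.exp (-E.β * |t - s|) ≤ Real.exp E.β * Real.exp (-E.β * |t₀ - s|) := by
        rw [← Real.exp_add]
        apply Real.exp_le_exp.2
        have hb1 := mul_le_mul_of_nonneg_left h1 E.β_pos.le
        have hb2 := mul_le_mul_of_nonneg_left h2.le E.β_pos.le
        nlinarith
      calc E.N * Real.exp (-E.β * |t - s|) * M
          ≤ E.N * (Real.exp E.β * Real.exp (-E.β * |t₀ - s|)) * M :=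
            mul_le_mul_of_nonneg_right (mul_le_mul_of_nonneg_left h3 E.N_pos.le) hM0
        _ = E.N * Real.exp E.β * Real.exp (-E.β * |t₀ - s|) * M := by ring
    · exact (((integrable_exp_abs_shift_green E.β_pos t₀).const_mul
        (E.N * Real.exp E.β)).mul_const M).congr
        (Filter.Eventually.of_forall fun s => by ring)
    · have hae : ∀ᵐ s : ℝ, s ≠ t₀ := by
        refine MeasureTheory.ae_iff.2 ?_
        simpa using MeasureTheory.measure_singleton (μ := (volume : Measure ℝ)) t₀
      exact hae.mono fun s hs => E.contAt_G hs (f s)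
  · exact isBounded_iff_forall_norm_le.2
      ⟨2 * (1 + E.H) * E.N / E.β * M, by rintro _ ⟨t, rfl⟩; exact hsup t⟩
end

section
/- Let f : [0,∞) → X be bounded and continuous, let u₀ ∈ X be such that ζ₀ := u₀ − ∫_0^∞ G(0,s) f(s) ds belongs to P(0)X, and define u(t) := U(t,0) ζ₀ + ∫_0^∞ G(t,s) f(s) ds for t ≥ 0. Then for all t ≥ 0, ‖u(t)‖ ≤ N ‖u₀‖ + (3(1+H)N/β) · sup_{s≥0} ‖f(s)‖. -/
open MeasureTheory Real Filter Bornology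

section AuxExp
open MeasureTheory Set Filter

lemma exp_int_Ioi' {β : ℝ} (hβ : 0 < β) (a : ℝ) :
    ∫ s in Set.Ioi a, Real.exp (-β * (s - a)) = 1 / β := by
  have hβ' : β ≠ 0 := ne_of_gt hβ
  have hint : MeasureTheory.IntegrableOn (fun s => Real.exp (-β * (s - a))) (Set.Ioi a) := by
    have h := (exp_neg_integrableOn_Ioi a hβ).const_mul (Real.exp (β * a))
    apply MeasureTheory.IntegrableOn.congr_fun h ?_ measurableSet_Ioi
    intro s _
    simp only [← Real.exp_add]
    ring_nf
  have hderiv : ∀ x ∈ Set.Ici a,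
      HasDerivAt (fun s => -(1/β) * Real.exp (-β * (s - a))) (Real.exp (-β * (x - a))) x := by
    intro x _
    have h1 : HasDerivAt (fun s : ℝ => -β * (s - a)) (-β) x := by
      simpa using ((hasDerivAt_id x).sub_const a).const_mul (-β)
    have h2 := (h1.exp).const_mul (-(1/β))
    convert h2 using 1
    · rfl
    · rfl
    · field_simp
  have htend : Tendsto (fun s => -(1/β) * Real.exp (-β * (s - a))) atTop (nhds 0) := by
    have h1 : Tendsto (fun s : ℝ => -β * (s - a)) atTop atBot := by
      apply Tendsto.const_mul_atTop_of_neg (neg_neg_iff_pos.mpr hβ)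
      exact tendsto_atTop_add_const_right atTop (-a) tendsto_id
    have h2 := (Real.tendsto_exp_atBot).comp h1
    simpa using h2.const_mul (-(1/β))
  have := MeasureTheory.integral_Ioi_of_hasDerivAt_of_tendsto'
      (fun x hx => hderiv x hx) hint htend
  rw [this]
  simp

lemma exp_int_Ioc' {β : ℝ} (hβ : 0 < β) {t : ℝ} (ht : 0 ≤ t) :
    ∫ s in Set.Ioc 0 t, Real.exp (-β * (t - s)) ≤ 1 / β := by
  rw [← intervalIntegral.integral_of_le ht]
  have hderiv : ∀ x ∈ Set.uIcc (0:ℝ) t,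
      HasDerivAt (fun s => (1/β) * Real.exp (-β * (t - s))) (Real.exp (-β * (t - x))) x := by
    intro x _
    have h1 : HasDerivAt (fun s : ℝ => -β * (t - s)) β x := by
      simpa using ((hasDerivAt_id x).const_sub t).const_mul (-β)
    have h2 := (h1.exp).const_mul (1/β)
    convert h2 using 1
    · rfl
    · rfl
    · linear_combination (-Real.exp (-β * (t - x))) * mul_inv_cancel₀ (ne_of_gt hβ)
  have hcont : IntervalIntegrable (fun s => Real.exp (-β * (t - s))) MeasureTheory.volume 0 t :=
    (Continuous.intervalIntegrable (by fun_prop) 0 t)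
  rw [intervalIntegral.integral_eq_sub_of_hasDerivAt hderiv hcont]
  simp only [sub_zero, mul_zero, sub_self, Real.exp_zero, mul_one]
  have h3 : 0 ≤ (1/β) * Real.exp (-β * t) := by positivity
  linarith

end AuxExp

/-- boundedness estimate for the half-line solution
`u(t) = U(t,0) ζ₀ + ∫_0^∞ G(t,s) f(s) ds` with
`ζ₀ = u₀ − ∫_0^∞ G(0,s) f(s) ds ∈ P(0)X`:
`‖u(t)‖ ≤ N ‖u₀‖ + (3(1+H)N/β) · sup_{s ≥ 0} ‖f(s)‖` for all `t ≥ 0`. -/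
theorem half_line_solution_bound
    {X : Type*} [NormedAddCommGroup X] [NormedSpace ℝ X] [CompleteSpace X]
    (E : EvolutionDichotomy X) (f : ℝ → X)
    (hfc : ContinuousOn f (Set.Ici 0))
    (hfb : Bornology.IsBounded (f '' Set.Ici 0))
    (u₀ : X)
    (hζ : E.P 0 (u₀ - ∫ s in Set.Ioi (0:ℝ), E.G 0 s (f s)) =
      u₀ - ∫ s in Set.Ioi (0:ℝ), E.G 0 s (f s)) :
    ∀ t : ℝ, 0 ≤ t →
      ‖E.U t 0 (u₀ - ∫ s in Set.Ioi (0:ℝ), E.G 0 s (f s)) +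
          ∫ s in Set.Ioi (0:ℝ), E.G t s (f s)‖ ≤
        E.N * ‖u₀‖ + (3 * (1 + E.H) * E.N / E.β) * ⨆ s : Set.Ici (0:ℝ), ‖f s‖ := by
  
  intro t ht
  classical
  set ζ := u₀ - ∫ s in Set.Ioi (0:ℝ), E.G 0 s (f s) with hζdef
  set M : ℝ := ⨆ s : Set.Ici (0:ℝ), ‖f s‖ with hM
  have hM0 : 0 ≤ M := Real.iSup_nonneg (fun s => norm_nonneg _)
  obtain ⟨C, hC⟩ := isBounded_iff_forall_norm_le.mp hfb
  have hMle : ∀ s : ℝ, 0 ≤ s → ‖f s‖ ≤ M := by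
    intro s hs
    have hbdd : BddAbove (Set.range (fun s : Set.Ici (0:ℝ) => ‖f s‖)) := by
      refine ⟨C, ?_⟩
      rintro _ ⟨⟨y, hy⟩, rfl⟩
      exact hC _ (Set.mem_image_of_mem f hy)
    exact le_ciSup hbdd ⟨s, hs⟩
  have hH0 : 0 ≤ E.H := le_trans (norm_nonneg (E.P 0)) (E.P_bound 0)
  -- Green function estimate
  have hG : ∀ a b : ℝ, ∀ x : X, ‖E.G a b x‖ ≤ E.N * Real.exp (-E.β * |a - b|) * ‖x‖ := by
    intro a b x
    unfold EvolutionDichotomy.G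
    by_cases h : b < a
    · rw [if_pos h]
      simp only [ContinuousLinearMap.comp_apply]
      rw [E.comm h.le]
      have := E.P_decay h.le x
      rwa [abs_of_pos (sub_pos.mpr h)]
    · rw [if_neg h]
      push_neg at h
      simp only [ContinuousLinearMap.neg_apply, ContinuousLinearMap.comp_apply, norm_neg,
        EvolutionDichotomy.Q, ContinuousLinearMap.sub_apply, ContinuousLinearMap.id_apply]
      have := E.Q_decay h x
      rwa [abs_sub_comm, abs_of_nonneg (sub_nonneg.mpr h)]
  -- `P 0` kills `G 0 s` for `s > 0`
  have hPG : ∀ s ∈ Set.Ioi (0:ℝ), E.P 0 (E.G 0 s (f s)) = 0 := by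
    intro s hs
    have : E.G 0 s = -((E.V 0 s).comp (E.Q s)) := by
      unfold EvolutionDichotomy.G
      rw [if_neg (by simp [le_of_lt (Set.mem_Ioi.mp hs)])]
    rw [this]
    simp only [ContinuousLinearMap.neg_apply, ContinuousLinearMap.comp_apply, map_neg,
      EvolutionDichotomy.Q, ContinuousLinearMap.sub_apply, ContinuousLinearMap.id_apply]
    rw [E.V_mapsTo (le_of_lt hs)]
    simp
  -- `ζ = P 0 u₀`
  have hPint : E.P 0 (∫ s in Set.Ioi (0:ℝ), E.G 0 s (f s)) = 0 := by
    by_cases hI : MeasureTheory.IntegrableOn (fun s => E.G 0 s (f s)) (Set.Ioi 0)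
    · rw [← ContinuousLinearMap.integral_comp_comm _ hI]
      rw [MeasureTheory.setIntegral_congr_fun measurableSet_Ioi hPG]
      simp
    · rw [MeasureTheory.integral_undef hI]
      simp
  have hz : ζ = E.P 0 u₀ := by
    calc ζ = E.P 0 ζ := hζ.symm
    _ = E.P 0 u₀ - E.P 0 (∫ s in Set.Ioi (0:ℝ), E.G 0 s (f s)) := by rw [hζdef, map_sub]
    _ = E.P 0 u₀ := by rw [hPint, sub_zero]
  have hU : ‖E.U t 0 ζ‖ ≤ E.N * ‖u₀‖ := by
    rw [hz]
    calc ‖E.U t 0 (E.P 0 u₀)‖ ≤ E.N * Real.exp (-E.β * (t - 0)) * ‖u₀‖ := E.P_decay ht u₀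
    _ ≤ E.N * 1 * ‖u₀‖ := by
        gcongr
        · exact E.N_pos.le
        · rw [Real.exp_le_one_iff]
          nlinarith [E.β_pos]
    _ = E.N * ‖u₀‖ := by ring
  -- the integral term
  have hJ : ‖∫ s in Set.Ioi (0:ℝ), E.G t s (f s)‖ ≤ 2 * E.N * M / E.β := by
    have h2NM : 0 ≤ 2 * E.N * M / E.β :=
      div_nonneg (by nlinarith [E.N_pos]) E.β_pos.le
    by_cases hI : MeasureTheory.IntegrableOn (fun s => E.G t s (f s)) (Set.Ioi 0)
    · have hnormint : MeasureTheory.IntegrableOn (fun s => ‖E.G t s (f s)‖) (Set.Ioi 0) := hI.norm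
      have hsub1 : Set.Ioc (0:ℝ) t ⊆ Set.Ioi 0 := Set.Ioc_subset_Ioi_self
      have hsub2 : Set.Ioi t ⊆ Set.Ioi (0:ℝ) := Set.Ioi_subset_Ioi ht
      have h1 : ∫ s in Set.Ioc (0:ℝ) t, ‖E.G t s (f s)‖ ≤ E.N * M * (1 / E.β) := by
        have hb : MeasureTheory.IntegrableOn
            (fun s => E.N * M * Real.exp (-E.β * (t - s))) (Set.Ioc (0:ℝ) t) :=
          (Continuous.integrableOn_Ioc (by fun_prop))
        calc ∫ s in Set.Ioc (0:ℝ) t, ‖E.G t s (f s)‖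
            ≤ ∫ s in Set.Ioc (0:ℝ) t, E.N * M * Real.exp (-E.β * (t - s)) := by
              apply MeasureTheory.setIntegral_mono_on (hnormint.mono_set hsub1) hb
                measurableSet_Ioc
              intro s hs
              have habs : |t - s| = t - s := abs_of_nonneg (by linarith [hs.2])
              calc ‖E.G t s (f s)‖ ≤ E.N * Real.exp (-E.β * (t - s)) * ‖f s‖ := by
                    rw [← habs]; exact hG t s (f s)
              _ ≤ E.N * Real.exp (-E.β * (t - s)) * M := by
                    gcongr
                    · exact mul_nonneg E.N_pos.le (Real.exp_nonneg _)
                    · exact hMle s (le_of_lt hs.1)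
              _ = E.N * M * Real.exp (-E.β * (t - s)) := by ring
          _ = E.N * M * ∫ s in Set.Ioc (0:ℝ) t, Real.exp (-E.β * (t - s)) := by
              rw [MeasureTheory.integral_const_mul]
          _ ≤ E.N * M * (1 / E.β) :=
              mul_le_mul_of_nonneg_left (exp_int_Ioc' E.β_pos ht) (mul_nonneg E.N_pos.le hM0)
      have h2 : ∫ s in Set.Ioi t, ‖E.G t s (f s)‖ ≤ E.N * M * (1 / E.β) := by
        have hb : MeasureTheory.IntegrableOn
            (fun s => E.N * M * Real.exp (-E.β * (s - t))) (Set.Ioi t) := by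
          have h := (exp_neg_integrableOn_Ioi t E.β_pos).const_mul (E.N * M * Real.exp (E.β * t))
          apply MeasureTheory.IntegrableOn.congr_fun h ?_ measurableSet_Ioi
          intro s _
          simp only [mul_assoc, ← Real.exp_add]
          ring_nf
        calc ∫ s in Set.Ioi t, ‖E.G t s (f s)‖
            ≤ ∫ s in Set.Ioi t, E.N * M * Real.exp (-E.β * (s - t)) := by
              apply MeasureTheory.setIntegral_mono_on (hnormint.mono_set hsub2) hb
                measurableSet_Ioi
              intro s hs
              have habs : |t - s| = s - t := by
                rw [abs_sub_comm]
                exact abs_of_nonneg (by linarith [Set.mem_Ioi.mp hs])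
              calc ‖E.G t s (f s)‖ ≤ E.N * Real.exp (-E.β * (s - t)) * ‖f s‖ := by
                    rw [← habs]; exact hG t s (f s)
              _ ≤ E.N * Real.exp (-E.β * (s - t)) * M := by
                    gcongr
                    · exact mul_nonneg E.N_pos.le (Real.exp_nonneg _)
                    · exact hMle s (le_of_lt (lt_of_le_of_lt ht (Set.mem_Ioi.mp hs)))
              _ = E.N * M * Real.exp (-E.β * (s - t)) := by ring
          _ = E.N * M * ∫ s in Set.Ioi t, Real.exp (-E.β * (s - t)) := by
              rw [MeasureTheory.integral_const_mul]
          _ = E.N * M * (1 / E.β) := by rw [exp_int_Ioi' E.β_pos t]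
      calc ‖∫ s in Set.Ioi (0:ℝ), E.G t s (f s)‖
          ≤ ∫ s in Set.Ioi (0:ℝ), ‖E.G t s (f s)‖ :=
            MeasureTheory.norm_integral_le_integral_norm _
      _ = (∫ s in Set.Ioc (0:ℝ) t, ‖E.G t s (f s)‖) + ∫ s in Set.Ioi t, ‖E.G t s (f s)‖ := by
            rw [← Set.Ioc_union_Ioi_eq_Ioi ht,
              MeasureTheory.setIntegral_union (Set.Ioc_disjoint_Ioi le_rfl) measurableSet_Ioi
                (hnormint.mono_set hsub1) (hnormint.mono_set hsub2)]
      _ ≤ E.N * M * (1 / E.β) + E.N * M * (1 / E.β) := add_le_add h1 h2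
      _ = 2 * E.N * M / E.β := by ring
    · rw [MeasureTheory.integral_undef hI]
      simpa using h2NM
  calc ‖E.U t 0 ζ + ∫ s in Set.Ioi (0:ℝ), E.G t s (f s)‖
      ≤ ‖E.U t 0 ζ‖ + ‖∫ s in Set.Ioi (0:ℝ), E.G t s (f s)‖ := norm_add_le _ _
  _ ≤ E.N * ‖u₀‖ + 2 * E.N * M / E.β := add_le_add hU hJ
  _ ≤ E.N * ‖u₀‖ + (3 * (1 + E.H) * E.N / E.β) * M := by
      have hkey : 2 * E.N * M / E.β ≤ 3 * (1 + E.H) * E.N / E.β * M := by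
        rw [div_mul_eq_mul_div, div_le_div_iff₀ E.β_pos E.β_pos]
        nlinarith [mul_nonneg (mul_nonneg E.N_pos.le hM0) E.β_pos.le,
          mul_nonneg (mul_nonneg (mul_nonneg hH0 E.N_pos.le) hM0) E.β_pos.le]
      linarith
end
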